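/- For the Hanoi Towers group H(3) and every n ≥ 1, the set of real eigenvalues of the adjacency matrix T_n of the level-n Schreier graph equals {3} ∪ ⋃_{i=0}^{n−1} f^{−i}({0}) ∪ ⋃_{j=0}^{n−2} f^{−j}({−2}), where f(x) = x² − x − 3 and f^{−m}(B) denotes the preimage of B ⊆ ℝ under the m-th iterate of f. -/

import Mathlib

/-- The generator `a_{(ij)}` of the Hanoi Towers group, acting on finite words:
`a_{(ij)}(iw) = jw`, `a_{(ij)}(jw) = iw`, `a_{(ij)}(xw) = x · a_{(ij)}(w)` for `x ∉ {i,j}`,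
and `a_{(ij)}(ε) = ε`. -/
def hMove {k : ℕ} (i j : Fin k) : List (Fin k) → List (Fin k)
  | [] => []
  | x :: w => if x = i then j :: w else if x = j then i :: w else x :: hMove i j w

theorem hMove_involutive {k : ℕ} (i j : Fin k) : ∀ l, hMove i j (hMove i j l) = l := by
  intro l
  induction l with
  | nil => rfl
  | cons x w ih =>
    by_cases hxi : x = i
    · by_cases hij : j = i <;> simp [hMove, hxi, hij]
    · by_cases hxj : x = j
      · by_cases hij : j = i <;> simp [hMove, hxi, hxj, hij]
      · simp [hMove, hxi, hxj, ih]

/-- The generator `a_{(ij)}` as a permutation of the set of finite words. -/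
def hGen {k : ℕ} (i j : Fin k) : Equiv.Perm (List (Fin k)) :=
  ⟨hMove i j, hMove i j, hMove_involutive i j, hMove_involutive i j⟩

/-- The Hanoi Towers group `H(k)`, the subgroup of the permutation group of the set of
finite words over `{0, …, k-1}` generated by the `a_{(ij)}` for `i < j`. -/
def HanoiGroup (k : ℕ) : Subgroup (Equiv.Perm (List (Fin k))) :=
  Subgroup.closure {g | ∃ i j : Fin k, i < j ∧ g = hGen i j}

theorem hMove_length {k : ℕ} (i j : Fin k) (l : List (Fin k)) :
    (hMove i j l).length = l.length := by
  induction l with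
  | nil => rfl
  | cons x w ih =>
    by_cases hxi : x = i
    · by_cases hij : j = i <;> simp [hMove, hxi, hij]
    · by_cases hxj : x = j
      · by_cases hij : j = i <;> simp [hMove, hxi, hxj, hij]
      · simp [hMove, hxi, hxj, ih]

/-- The action of the generator `a_{(ij)}` on words of length `n`, viewed as functions
`Fin n → Fin k` (via the word `List.ofFn u`; the action preserves length). -/
def levelMove {k n : ℕ} (i j : Fin k) (u : Fin n → Fin k) : Fin n → Fin k :=
  fun m => (hMove i j (List.ofFn u)).get
    (Fin.cast (by rw [hMove_length, List.length_ofFn]) m)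

/-- The level-`n` Schreier graph `Γ_n` of `H(k)`: vertices are the `k^n` words of length
`n` over `{0, …, k-1}`, and `u`, `v` are adjacent iff `u ≠ v` and some generator
`a_{(ij)}` (with `i < j`) maps one to the other. -/
def levelGraph (k n : ℕ) : SimpleGraph (Fin n → Fin k) where
  Adj u v := u ≠ v ∧ ∃ i j : Fin k, i < j ∧ (levelMove i j u = v ∨ levelMove i j v = u)
  symm := by
    constructor
    rintro u v ⟨huv, i, j, hij, h⟩
    exact ⟨huv.symm, i, j, hij, h.symm⟩
  loopless := ⟨fun u h => h.1 rfl⟩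

open Classical in
/-- The adjacency matrix `T_n = Σ_{i<j} ρ_n(a_{(ij)})` of the level-`n` Schreier graph of
`H(k)`: the `(u,v)` entry counts the generators `a_{(ij)}`, `i < j`, with
`a_{(ij)}(v) = u` (each summand is the permutation matrix of `ρ_n(a_{(ij)})`). -/
noncomputable def adjMat (k n : ℕ) : Matrix (Fin n → Fin k) (Fin n → Fin k) ℝ :=
  Matrix.of fun u v =>
    ((Finset.univ.filter
      fun p : Fin k × Fin k => p.1 < p.2 ∧ levelMove p.1 p.2 v = u).card : ℝ)

/-- The polynomial `f(x) = x² - x - 3`, as a map `ℝ → ℝ`. -/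
def hanoiPoly : ℝ → ℝ := fun x => x ^ 2 - x - 3

namespace Hanoi3

theorem ofFn_levelMove {k n : ℕ} (i j : Fin k) (u : Fin n → Fin k) :
    List.ofFn (levelMove i j u) = hMove i j (List.ofFn u) := by
  apply List.ext_get
  · simp [hMove_length]
  · intro m h1 h2
    simp [levelMove, List.get_ofFn]

theorem hMove_cons {k : ℕ} (i j x : Fin k) (w : List (Fin k)) :
    hMove i j (x :: w) =
      if x = i then j :: w else if x = j then i :: w else x :: hMove i j w := rfl

theorem ofFn_inj' {k n : ℕ} {u v : Fin n → Fin k}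
    (h : List.ofFn u = List.ofFn v) : u = v := by
  funext m
  have := List.ofFn_injective h
  exact congrFun this m

theorem levelMove_cons {k n : ℕ} (i j : Fin k) (h : Fin k) (t : Fin n → Fin k) :
    levelMove i j (Fin.cons h t) =
      if h = i then Fin.cons j t else if h = j then Fin.cons i t
        else Fin.cons h (levelMove i j t) := by
  apply ofFn_inj'
  rw [ofFn_levelMove]
  have hc : List.ofFn (Fin.cons h t : Fin (n+1) → Fin k) = h :: List.ofFn t := by
    simp [List.ofFn_succ]
  rw [hc, hMove_cons]
  by_cases h1 : h = i
  · simp [h1, List.ofFn_succ]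
  · by_cases h2 : h = j
    · by_cases h3 : j = i <;> simp [h1, h2, h3, List.ofFn_succ]
    · simp [h1, h2, List.ofFn_succ, ofFn_levelMove]

theorem levelMove_invol {k n : ℕ} (i j : Fin k) (u : Fin n → Fin k) :
    levelMove i j (levelMove i j u) = u := by
  apply ofFn_inj'
  rw [ofFn_levelMove, ofFn_levelMove, hMove_involutive]


abbrev V (n : ℕ) := Fin n → Fin 3

def mA {n : ℕ} : V n → V n := levelMove 0 1
def mB {n : ℕ} : V n → V n := levelMove 0 2
def mC {n : ℕ} : V n → V n := levelMove 1 2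

theorem mA_invol {n : ℕ} (u : V n) : mA (mA u) = u := levelMove_invol _ _ u
theorem mB_invol {n : ℕ} (u : V n) : mB (mB u) = u := levelMove_invol _ _ u
theorem mC_invol {n : ℕ} (u : V n) : mC (mC u) = u := levelMove_invol _ _ u

open Finset in
theorem adjMat_apply (n : ℕ) (u v : V n) :
    adjMat 3 n u v =
      (if levelMove (0 : Fin 3) 1 v = u then (1:ℝ) else 0) +
      (if levelMove (0 : Fin 3) 2 v = u then (1:ℝ) else 0) +
      (if levelMove (1 : Fin 3) 2 v = u then (1:ℝ) else 0) := by
  classical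
  have : ((Finset.univ.filter
      fun p : Fin 3 × Fin 3 => p.1 < p.2 ∧ levelMove p.1 p.2 v = u).card : ℝ)
      = ∑ p : Fin 3 × Fin 3,
          if p.1 < p.2 ∧ levelMove p.1 p.2 v = u then (1:ℝ) else 0 := by
    rw [Finset.card_filter]
    push_cast
    rfl
  show ((Finset.univ.filter
      fun p : Fin 3 × Fin 3 => p.1 < p.2 ∧ levelMove p.1 p.2 v = u).card : ℝ) = _
  rw [this, Fintype.sum_prod_type]
  rw [Fin.sum_univ_three]
  rw [Fin.sum_univ_three, Fin.sum_univ_three, Fin.sum_univ_three]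
  norm_num [Fin.lt_def]

theorem mulVec_adjMat {n : ℕ} (x : V n → ℝ) (u : V n) :
    (adjMat 3 n).mulVec x u = x (mA u) + x (mB u) + x (mC u) := by
  classical
  have key : ∀ i j : Fin 3,
      (∑ v : V n, (if levelMove i j v = u then (1:ℝ) else 0) * x v)
        = x (levelMove i j u) := by
    intro i j
    rw [Finset.sum_eq_single (levelMove i j u)]
    · simp [levelMove_invol]
    · intro v _ hv
      have : levelMove i j v ≠ u := by
        intro h
        apply hv
        rw [← h, levelMove_invol]
      simp [this]
    · simp
  show (∑ v : V n, adjMat 3 n u v * x v) = _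
  simp only [adjMat_apply, add_mul]
  rw [Finset.sum_add_distrib, Finset.sum_add_distrib, key, key, key]
  rfl

/-- eigen-equation predicate -/
def Eig (n : ℕ) (lam : ℝ) : Prop :=
  ∃ x : V n → ℝ, x ≠ 0 ∧ ∀ u, x (mA u) + x (mB u) + x (mC u) = lam * x u

theorem mem_spectrum_iff (n : ℕ) (lam : ℝ) :
    lam ∈ spectrum ℝ (adjMat 3 n) ↔ Eig n lam := by
  classical
  rw [spectrum.mem_iff]
  rw [Algebra.algebraMap_eq_smul_one]
  constructor
  · intro h
    have hdet : (lam • (1 : Matrix (V n) (V n) ℝ) - adjMat 3 n).det = 0 := by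
      by_contra hd
      exact h ((Matrix.isUnit_iff_isUnit_det _).mpr (isUnit_iff_ne_zero.mpr hd))
    obtain ⟨x, hx0, hx⟩ := (Matrix.exists_mulVec_eq_zero_iff).mpr hdet
    refine ⟨x, hx0, fun u => ?_⟩
    have := congrFun hx u
    rw [Matrix.sub_mulVec, Matrix.smul_mulVec, Matrix.one_mulVec] at this
    have h2 : (lam • x) u - (adjMat 3 n).mulVec x u = 0 := this
    rw [mulVec_adjMat] at h2
    have : (lam • x) u = lam * x u := rfl
    linarith [h2, this.symm.le]
  · rintro ⟨x, hx0, hx⟩ hu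
    have hdet : (lam • (1 : Matrix (V n) (V n) ℝ) - adjMat 3 n).det = 0 := by
      rw [← Matrix.exists_mulVec_eq_zero_iff]
      refine ⟨x, hx0, ?_⟩
      funext u
      rw [Matrix.sub_mulVec, Matrix.smul_mulVec, Matrix.one_mulVec]
      have h2 : (adjMat 3 n).mulVec x u = lam * x u := by
        rw [mulVec_adjMat]; exact hx u
      show (lam • x) u - (adjMat 3 n).mulVec x u = 0
      rw [h2]
      show lam * x u - lam * x u = 0
      ring
    exact isUnit_iff_ne_zero.mp ((Matrix.isUnit_iff_isUnit_det _).mp hu) hdet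

-- specialized move-on-cons lemmas
theorem mA_cons0 {n : ℕ} (t : V n) : mA (Fin.cons 0 t) = Fin.cons 1 t := by
  simp [mA, levelMove_cons]
theorem mA_cons1 {n : ℕ} (t : V n) : mA (Fin.cons 1 t) = Fin.cons 0 t := by
  simp [mA, levelMove_cons]
theorem mA_cons2 {n : ℕ} (t : V n) : mA (Fin.cons 2 t) = Fin.cons 2 (mA t) := by
  simp [mA, levelMove_cons]
theorem mB_cons0 {n : ℕ} (t : V n) : mB (Fin.cons 0 t) = Fin.cons 2 t := by
  simp [mB, levelMove_cons]
theorem mB_cons1 {n : ℕ} (t : V n) : mB (Fin.cons 1 t) = Fin.cons 1 (mB t) := by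
  simp [mB, levelMove_cons]
theorem mB_cons2 {n : ℕ} (t : V n) : mB (Fin.cons 2 t) = Fin.cons 0 t := by
  simp [mB, levelMove_cons]
theorem mC_cons0 {n : ℕ} (t : V n) : mC (Fin.cons 0 t) = Fin.cons 0 (mC t) := by
  simp [mC, levelMove_cons]
theorem mC_cons1 {n : ℕ} (t : V n) : mC (Fin.cons 1 t) = Fin.cons 2 t := by
  simp [mC, levelMove_cons]
theorem mC_cons2 {n : ℕ} (t : V n) : mC (Fin.cons 2 t) = Fin.cons 1 t := by
  simp [mC, levelMove_cons]

theorem eig_three (n : ℕ) : Eig n 3 := by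
  refine ⟨fun _ => 1, ?_, fun u => by norm_num⟩
  intro h
  have := congrFun h (fun _ => 0)
  norm_num at this

/-- case analysis for Fin 3 -/
theorem fin3_cases (h : Fin 3) : h = 0 ∨ h = 1 ∨ h = 2 := by
  omega

/-- every vertex at level n+1 is a cons -/
theorem eq_cons {n : ℕ} (u : V (n+1)) : u = Fin.cons (u 0) (Fin.tail u) :=
  (Fin.cons_self_tail u).symm

theorem eig_zero (n : ℕ) : Eig (n+1) 0 := by
  classical
  set c : Fin 3 → ℝ := fun h => if h = 0 then 1 else if h = 1 then -1 else 0 with hc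
  refine ⟨fun u => c (u 0), ?_, ?_⟩
  · intro h
    have := congrFun h (Fin.cons 0 (fun _ => 0))
    simp [hc] at this
  · intro u
    rw [eq_cons u]
    rcases fin3_cases (u 0) with h | h | h <;> rw [h] <;>
      simp [mA_cons0, mA_cons1, mA_cons2, mB_cons0, mB_cons1, mB_cons2,
        mC_cons0, mC_cons1, mC_cons2, hc]

theorem eig_neg2 (n : ℕ) : Eig (n+2) (-2) := by
  classical
  set w : V n := fun _ => 0 with hw
  set g : Fin 3 → Fin 3 → ℝ := ![![0,1,-1], ![-1,0,1], ![1,-1,0]] with hg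
  have g00 : g 0 0 = 0 := by norm_num [hg]
  have g01 : g 0 1 = 1 := by norm_num [hg]
  have g02 : g 0 2 = -1 := by rw [hg]; rfl
  have g10 : g 1 0 = -1 := by norm_num [hg]
  have g11 : g 1 1 = 0 := by norm_num [hg]
  have g12 : g 1 2 = 1 := by rw [hg]; rfl
  have g20 : g 2 0 = 1 := by rw [hg]; rfl
  have g21 : g 2 1 = -1 := by rw [hg]; rfl
  have g22 : g 2 2 = 0 := by rw [hg]; rfl
  set x : V (n+2) → ℝ :=
    fun u => g (u 0) (Fin.tail u 0) * (if Fin.tail (Fin.tail u) = w then 1 else 0)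
    with hx
  have xval : ∀ (h : Fin 3) (t : V (n+1)),
      x (Fin.cons h t) = g h (t 0) * (if Fin.tail t = w then 1 else 0) := by
    intro h t
    simp [hx, Fin.tail_cons]
  have gsum : ∀ a : Fin 3, g 0 a + g 1 a + g 2 a = 0 := by
    intro a
    rcases fin3_cases a with h|h|h <;> rw [h] <;>
      simp only [g00,g01,g02,g10,g11,g12,g20,g21,g22] <;> norm_num
  -- moved-point relations
  have key0 : ∀ t : V (n+1), x (Fin.cons 0 (mC t)) = - x (Fin.cons 0 t) := by
    intro t
    rw [eq_cons t]
    rcases fin3_cases (t 0) with h|h|h <;> rw [h] <;>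
      [rw [mC_cons0]; rw [mC_cons1]; rw [mC_cons2]] <;>
      rw [xval, xval] <;>
      simp only [Fin.cons_zero, Fin.tail_cons, g00, g01, g02] <;> ring
  have key1 : ∀ t : V (n+1), x (Fin.cons 1 (mB t)) = - x (Fin.cons 1 t) := by
    intro t
    rw [eq_cons t]
    rcases fin3_cases (t 0) with h|h|h <;> rw [h] <;>
      [rw [mB_cons0]; rw [mB_cons1]; rw [mB_cons2]] <;>
      rw [xval, xval] <;>
      simp only [Fin.cons_zero, Fin.tail_cons, g10, g11, g12] <;> ring
  have key2 : ∀ t : V (n+1), x (Fin.cons 2 (mA t)) = - x (Fin.cons 2 t) := by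
    intro t
    rw [eq_cons t]
    rcases fin3_cases (t 0) with h|h|h <;> rw [h] <;>
      [rw [mA_cons0]; rw [mA_cons1]; rw [mA_cons2]] <;>
      rw [xval, xval] <;>
      simp only [Fin.cons_zero, Fin.tail_cons, g20, g21, g22] <;> ring
  refine ⟨x, ?_, ?_⟩
  · intro h
    have := congrFun h (Fin.cons 0 (Fin.cons 1 w))
    rw [xval] at this
    simp only [Fin.cons_zero, Fin.tail_cons, g01, if_pos rfl] at this
    norm_num at this
  · intro u
    rw [eq_cons u]
    rcases fin3_cases (u 0) with h|h|h <;> rw [h]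
    · rw [mA_cons0, mB_cons0, mC_cons0, key0, xval, xval, xval]
      linear_combination (if Fin.tail (Fin.tail u) = w then (1:ℝ) else 0) * gsum (Fin.tail u 0)
    · rw [mA_cons1, mB_cons1, mC_cons1, key1, xval, xval, xval]
      linear_combination (if Fin.tail (Fin.tail u) = w then (1:ℝ) else 0) * gsum (Fin.tail u 0)
    · rw [mA_cons2, mB_cons2, mC_cons2, key2, xval, xval, xval]
      linear_combination (if Fin.tail (Fin.tail u) = w then (1:ℝ) else 0) * gsum (Fin.tail u 0)

theorem V0_eq (t s : V 0) : t = s := by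
  funext i
  exact i.elim0

theorem eig_one_classify (lam : ℝ) (h : Eig 1 lam) : lam = 3 ∨ lam = 0 := by
  obtain ⟨x, hx0, hx⟩ := h
  set e : V 0 := fun i => i.elim0 with he
  set p := x (Fin.cons 0 e) with hp
  set q := x (Fin.cons 1 e) with hq
  set r := x (Fin.cons 2 e) with hr
  have E0 : q + r + p = lam * p := by
    have := hx (Fin.cons 0 e)
    rwa [mA_cons0, mB_cons0, mC_cons0, V0_eq (mC e) e] at this
  have E1 : p + q + r = lam * q := by
    have := hx (Fin.cons 1 e)
    rwa [mA_cons1, mB_cons1, mC_cons1, V0_eq (mB e) e] at this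
  have E2 : p + q + r = lam * r := by
    have := hx (Fin.cons 2 e)
    rw [mA_cons2, mB_cons2, mC_cons2, V0_eq (mA e) e] at this
    linarith
  by_cases hl : lam = 0
  · right; exact hl
  left
  have hpq : p = q := mul_left_cancel₀ hl (by linarith)
  have hqr : q = r := mul_left_cancel₀ hl (by linarith)
  have hpn : p ≠ 0 := by
    intro hzero
    apply hx0
    funext u
    rw [eq_cons u, V0_eq (Fin.tail u) e]
    rcases fin3_cases (u 0) with h|h|h <;> rw [h]
    · exact hzero
    · rw [← hq, ← hpq]; exact hzero
    · rw [← hr, ← hqr, ← hpq]; exact hzero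
  have : lam * p = 3 * p := by
    rw [← E0, hpq, hqr]; ring
  have := mul_right_cancel₀ hpn this
  exact this

/-- Forward decimation: eigenvalue at level n+1 (not 0, -2) gives f(λ) at level n. -/
theorem eig_down {n : ℕ} {lam : ℝ} (h0 : lam ≠ 0) (h2 : lam ≠ -2)
    (h : Eig (n+1) lam) : Eig n (hanoiPoly lam) := by
  obtain ⟨x, hx0, hx⟩ := h
  set x0 : V n → ℝ := fun t => x (Fin.cons 0 t) with hx0def
  set x1 : V n → ℝ := fun t => x (Fin.cons 1 t) with hx1def
  set x2 : V n → ℝ := fun t => x (Fin.cons 2 t) with hx2def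
  set s : V n → ℝ := fun t => -(x0 t + x1 t + x2 t) with hs
  have E0 : ∀ t, x1 t + x2 t + x0 (mC t) = lam * x0 t := by
    intro t
    have := hx (Fin.cons 0 t)
    rwa [mA_cons0, mB_cons0, mC_cons0] at this
  have E1 : ∀ t, x0 t + x2 t + x1 (mB t) = lam * x1 t := by
    intro t
    have := hx (Fin.cons 1 t)
    rw [mA_cons1, mB_cons1, mC_cons1] at this
    linarith
  have E2 : ∀ t, x0 t + x1 t + x2 (mA t) = lam * x2 t := by
    intro t
    have := hx (Fin.cons 2 t)
    rw [mA_cons2, mB_cons2, mC_cons2] at this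
    linarith
  -- (C - μ) x0 = s etc., with μ = lam + 1
  have R0 : ∀ t, x0 (mC t) = (lam + 1) * x0 t + s t := by
    intro t; have := E0 t; simp only [hs]; linarith
  have R1 : ∀ t, x1 (mB t) = (lam + 1) * x1 t + s t := by
    intro t; have := E1 t; simp only [hs]; linarith
  have R2 : ∀ t, x2 (mA t) = (lam + 1) * x2 t + s t := by
    intro t; have := E2 t; simp only [hs]; linarith
  -- invert: (1 - μ²) x_h t = s (m t) + μ s t
  have I0 : ∀ t, (1 - (lam+1)^2) * x0 t = s (mC t) + (lam + 1) * s t := by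
    intro t
    have h1 := R0 (mC t)
    rw [mC_invol] at h1
    have h2 := R0 t
    linear_combination h1 + (lam + 1) * h2
  have I1 : ∀ t, (1 - (lam+1)^2) * x1 t = s (mB t) + (lam + 1) * s t := by
    intro t
    have h1 := R1 (mB t)
    rw [mB_invol] at h1
    have h2 := R1 t
    linear_combination h1 + (lam + 1) * h2
  have I2 : ∀ t, (1 - (lam+1)^2) * x2 t = s (mA t) + (lam + 1) * s t := by
    intro t
    have h1 := R2 (mA t)
    rw [mA_invol] at h1
    have h2 := R2 t
    linear_combination h1 + (lam + 1) * h2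
  have hmu : 1 - (lam + 1)^2 ≠ 0 := by
    intro h
    have : lam * (lam + 2) = 0 := by linear_combination -h
    rcases mul_eq_zero.mp this with h|h
    · exact h0 h
    · exact h2 (by linarith)
  refine ⟨s, ?_, ?_⟩
  · intro hs0
    apply hx0
    funext u
    have hz : ∀ t, s t = 0 := fun t => congrFun hs0 t
    have z0 : ∀ t, x0 t = 0 := by
      intro t
      have := I0 t
      rw [hz, hz] at this
      simpa using (mul_eq_zero.mp (by linarith : (1 - (lam+1)^2) * x0 t = 0)).resolve_left hmu
    have z1 : ∀ t, x1 t = 0 := by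
      intro t
      have := I1 t
      rw [hz, hz] at this
      simpa using (mul_eq_zero.mp (by linarith : (1 - (lam+1)^2) * x1 t = 0)).resolve_left hmu
    have z2 : ∀ t, x2 t = 0 := by
      intro t
      have := I2 t
      rw [hz, hz] at this
      simpa using (mul_eq_zero.mp (by linarith : (1 - (lam+1)^2) * x2 t = 0)).resolve_left hmu
    rw [eq_cons u]
    rcases fin3_cases (u 0) with h|h|h <;> rw [h]
    · exact z0 (Fin.tail u)
    · exact z1 (Fin.tail u)
    · exact z2 (Fin.tail u)
  · intro t
    show s (mA t) + s (mB t) + s (mC t) = hanoiPoly lam * s t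
    have i0 := I0 t
    have i1 := I1 t
    have i2 := I2 t
    have hst : (1 - (lam+1)^2) * s t = -((1 - (lam+1)^2) * x0 t + (1 - (lam+1)^2) * x1 t + (1 - (lam+1)^2) * x2 t) := by
      simp only [hs]; ring
    rw [i0, i1, i2] at hst
    -- hst : (1 - μ²) s t = -(sum of s-moves + 3 μ s t)
    have key : s (mA t) + s (mB t) + s (mC t) = ((lam+1)^2 - 3*(lam+1) - 1) * s t := by
      linarith
    rw [key]
    unfold hanoiPoly
    ring

/-- Backward decimation: f(λ) at level n lifts to λ at level n+1 (λ ∉ {0,-2}). -/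
theorem eig_up {n : ℕ} {lam : ℝ} (h0 : lam ≠ 0) (h2 : lam ≠ -2)
    (h : Eig n (hanoiPoly lam)) : Eig (n+1) lam := by
  obtain ⟨s, hs0, hsE⟩ := h
  have hT : ∀ t, s (mA t) + s (mB t) + s (mC t) = (lam^2 - lam - 3) * s t := by
    intro t
    have := hsE t
    unfold hanoiPoly at this
    exact this
  set v : Fin 3 → V n → ℝ := fun h t =>
    (if h = 0 then s (mC t) else if h = 1 then s (mB t) else s (mA t)) + (lam + 1) * s t
    with hv
  set x : V (n+1) → ℝ := fun u => v (u 0) (Fin.tail u) with hx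
  have xval : ∀ (h : Fin 3) (t : V n), x (Fin.cons h t) = v h t := by
    intro h t
    simp [hx, Fin.tail_cons]
  have v0 : ∀ t, v 0 t = s (mC t) + (lam + 1) * s t := by intro t; simp [hv]
  have v1 : ∀ t, v 1 t = s (mB t) + (lam + 1) * s t := by
    intro t
    simp only [hv]
    norm_num
  have v2 : ∀ t, v 2 t = s (mA t) + (lam + 1) * s t := by
    intro t
    simp only [hv]
    rw [if_neg (by decide : ¬(2:Fin 3) = 0), if_neg (by decide : ¬(2:Fin 3) = 1)]
  refine ⟨x, ?_, ?_⟩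
  · intro hxz
    have hz : ∀ (h : Fin 3) (t : V n), v h t = 0 := by
      intro h t
      have := congrFun hxz (Fin.cons h t)
      rwa [xval] at this
    have key : ∀ t, s (mC t) = -(lam + 1) * s t := by
      intro t
      have := hz 0 t
      rw [v0] at this
      linarith
    apply hs0
    funext t
    have h1 := key (mC t)
    rw [mC_invol] at h1
    have h2' := key t
    -- s t = μ² s t
    have hfac : lam * (lam + 2) * s t = 0 := by
      linear_combination -h1 + (lam + 1) * h2'
    rcases mul_eq_zero.mp hfac with hq|hq
    · rcases mul_eq_zero.mp hq with hq|hq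
      · exact absurd hq h0
      · exact absurd (by linarith : lam = -2) h2
    · exact hq
  · intro u
    rw [eq_cons u]
    rcases fin3_cases (u 0) with h|h|h <;> rw [h]
    · rw [mA_cons0, mB_cons0, mC_cons0, xval, xval, xval, xval,
        v1, v2, v0, v0]
      have hc := hT (Fin.tail u)
      have hinv : s (mC (mC (Fin.tail u))) = s (Fin.tail u) := by rw [mC_invol]
      rw [hinv]
      linear_combination hc
    · rw [mA_cons1, mB_cons1, mC_cons1, xval, xval, xval, xval,
        v0, v1, v1, v2]
      have hc := hT (Fin.tail u)
      have hinv : s (mB (mB (Fin.tail u))) = s (Fin.tail u) := by rw [mB_invol]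
      rw [hinv]
      linear_combination hc
    · rw [mA_cons2, mB_cons2, mC_cons2, xval, xval, xval, xval,
        v2, v0, v1, v2]
      have hc := hT (Fin.tail u)
      have hinv : s (mA (mA (Fin.tail u))) = s (Fin.tail u) := by rw [mA_invol]
      rw [hinv]
      linear_combination hc

theorem spec_step (m : ℕ) (hm : 1 ≤ m) :
    spectrum ℝ (adjMat 3 (m+1)) =
      {(0:ℝ), -2} ∪ hanoiPoly ⁻¹' spectrum ℝ (adjMat 3 m) := by
  obtain ⟨k, rfl⟩ : ∃ k, m = k + 1 := ⟨m - 1, by omega⟩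
  ext lam
  simp only [Set.mem_union, Set.mem_preimage, Set.mem_insert_iff, Set.mem_singleton_iff]
  rw [mem_spectrum_iff, mem_spectrum_iff]
  constructor
  · intro h
    by_cases h0 : lam = 0
    · exact Or.inl (Or.inl h0)
    by_cases h2 : lam = -2
    · exact Or.inl (Or.inr h2)
    exact Or.inr (eig_down h0 h2 h)
  · rintro ((rfl | rfl) | h)
    · exact eig_zero _
    · exact eig_neg2 _
    · by_cases h0 : lam = 0
      · rw [h0]; exact eig_zero _
      by_cases h2 : lam = -2
      · rw [h2]; exact eig_neg2 _
      exact eig_up h0 h2 h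

/-- The target spectrum set. -/
def Sset (n : ℕ) : Set ℝ :=
  {(3 : ℝ)} ∪ (⋃ i ∈ Finset.range n, hanoiPoly^[i] ⁻¹' {0}) ∪
    (⋃ j ∈ Finset.range (n - 1), hanoiPoly^[j] ⁻¹' {-2})

theorem mem_Sset (n : ℕ) (x : ℝ) :
    x ∈ Sset n ↔ x = 3 ∨ (∃ i, i < n ∧ hanoiPoly^[i] x = 0) ∨
      (∃ j, j < n - 1 ∧ hanoiPoly^[j] x = -2) := by
  simp only [Sset, Set.mem_union, Set.mem_iUnion, Set.mem_preimage,
    Set.mem_singleton_iff, Finset.mem_range, exists_prop]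
  rw [or_assoc]

theorem quad_three (x : ℝ) : hanoiPoly x = 3 ↔ x = 3 ∨ x = -2 := by
  constructor
  · intro h
    have hf : (x - 3) * (x + 2) = 0 := by
      unfold hanoiPoly at h
      linear_combination h
    rcases mul_eq_zero.mp hf with h | h
    · left; linarith
    · right; linarith
  · rintro (rfl | rfl) <;> norm_num [hanoiPoly]

theorem Sset_step (n : ℕ) (hn : 1 ≤ n) :
    Sset (n+1) = {(0:ℝ), -2} ∪ hanoiPoly ⁻¹' Sset n := by
  ext x
  simp only [Set.mem_union, Set.mem_preimage, Set.mem_insert_iff, Set.mem_singleton_iff]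
  rw [mem_Sset, mem_Sset]
  constructor
  · rintro (h3 | ⟨i, hi, hf⟩ | ⟨j, hj, hf⟩)
    · refine Or.inr (Or.inl ?_)
      rw [h3]
      norm_num [hanoiPoly]
    · rcases i with _ | k
      · exact Or.inl (Or.inl (by simpa using hf))
      · refine Or.inr (Or.inr (Or.inl ⟨k, by omega, ?_⟩))
        rwa [Function.iterate_succ_apply] at hf
    · rcases j with _ | k
      · exact Or.inl (Or.inr (by simpa using hf))
      · refine Or.inr (Or.inr (Or.inr ⟨k, by omega, ?_⟩))
        rwa [Function.iterate_succ_apply] at hf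
  · rintro ((rfl | rfl) | (h3 | ⟨i, hi, hf⟩ | ⟨j, hj, hf⟩))
    · exact Or.inr (Or.inl ⟨0, by omega, by simp⟩)
    · exact Or.inr (Or.inr ⟨0, by omega, by simp⟩)
    · rcases (quad_three x).mp h3 with rfl | rfl
      · exact Or.inl rfl
      · exact Or.inr (Or.inr ⟨0, by omega, by simp⟩)
    · exact Or.inr (Or.inl ⟨i + 1, by omega, by rwa [Function.iterate_succ_apply]⟩)
    · exact Or.inr (Or.inr ⟨j + 1, by omega, by rwa [Function.iterate_succ_apply]⟩)

theorem main : ∀ n, 1 ≤ n → spectrum ℝ (adjMat 3 n) = Sset n := by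
  intro n hn
  induction n, hn using Nat.le_induction with
  | base =>
    ext lam
    rw [mem_spectrum_iff, mem_Sset]
    constructor
    · intro h
      rcases eig_one_classify lam h with rfl | rfl
      · exact Or.inl rfl
      · exact Or.inr (Or.inl ⟨0, by omega, by simp⟩)
    · rintro (rfl | ⟨i, hi, hf⟩ | ⟨j, hj, hf⟩)
      · exact eig_three 1
      · have : i = 0 := by omega
        subst this
        simp only [Function.iterate_zero, id] at hf
        rw [hf]
        exact eig_zero 0
      · omega
  | succ n hn ih =>
    rw [spec_step n hn, ih, Sset_step n hn]

end Hanoi3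

/-- For `H(3)` and every `n ≥ 1`, the set of real eigenvalues of the
adjacency matrix `T_n` of the level-`n` Schreier graph equals
`{3} ∪ ⋃_{i=0}^{n-1} f⁻ⁱ({0}) ∪ ⋃_{j=0}^{n-2} f⁻ʲ({-2})` where `f(x) = x² - x - 3`. -/
theorem hanoi3_spectrum (n : ℕ) (hn : 1 ≤ n) :
    spectrum ℝ (adjMat 3 n) =
      {(3 : ℝ)} ∪ (⋃ i ∈ Finset.range n, hanoiPoly^[i] ⁻¹' {0}) ∪
        (⋃ j ∈ Finset.range (n - 1), hanoiPoly^[j] ⁻¹' {-2}) := by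
  exact Hanoi3.main n hn
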